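/- The twisted absolute length ℓ^θ is well-defined: for any w ∈ W, the minimal number of letters that must be deleted from a reduced expression for w so that the resulting subword represents an element of ι(θ) is the same for all reduced expressions of w. -/

import Mathlib

set_option linter.unusedSectionVars false
set_option maxHeartbeats 1000000

/-- The set of twisted identities `ι(θ) = {x·θ(x⁻¹) : x ∈ W}`. -/
def twistedIdentities {W : Type*} [Group W] (θ : W ≃* W) : Set W :=
  {w : W | ∃ x : W, w = x * θ x⁻¹}

/-- The minimal number of letters that must be deleted from the word `ω` so
that the resulting subword represents an element of `ι(θ)`. -/
noncomputable def delNum {B W : Type*} [Group W] {M : CoxeterMatrix B}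
    (cs : CoxeterSystem M W) (θ : W ≃* W) (ω : List B) : ℕ :=
  sInf {l : ℕ | ∃ ω' : List B, ω'.Sublist ω ∧ ω'.length + l = ω.length ∧
    cs.wordProd ω' ∈ twistedIdentities θ}


namespace TwistedAux

open List CoxeterSystem Multiplicative

/-! ### The reflection cocycle, built via a semidirect product -/

section Cocycle

variable {W : Type*} [Group W]

open scoped Classical in
/-- Indicator function of `t`, valued in `ZMod 2`. -/
noncomputable def delta (t : W) : W → ZMod 2 := fun t' => if t' = t then 1 else 0

lemma delta_self (t : W) : delta t t = 1 := by simp [delta]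

lemma delta_of_ne {t t' : W} (h : t' ≠ t) : delta t t' = 0 := by simp [delta, h]

lemma delta_conj (x u t : W) : delta (x * u * x⁻¹) t = delta u (x⁻¹ * t * x) := by
  unfold delta
  by_cases h : t = x * u * x⁻¹
  · rw [if_pos h, if_pos (by rw [h]; group)]
  · rw [if_neg h, if_neg (fun hc => h (by rw [← hc]; group))]

/-- Sum of indicator functions over a list. -/
noncomputable def nuList : List W → (W → ZMod 2)
  | [] => 0
  | t :: L => delta t + nuList L

@[simp] lemma nuList_nil : nuList ([] : List W) = 0 := rfl

@[simp] lemma nuList_cons (t : W) (L : List W) : nuList (t :: L) = delta t + nuList L := rfl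

lemma mem_of_nuList_ne_zero {L : List W} {t : W} (h : nuList L t ≠ 0) : t ∈ L := by
  induction L with
  | nil => simp [nuList] at h
  | cons x L ih =>
    by_cases hx : t = x
    · simp [hx]
    · right
      apply ih
      simpa [nuList, Pi.add_apply, delta_of_ne hx] using h

lemma nuList_conj (L : List W) (x : W) :
    nuList (L.map (fun u => x * u * x⁻¹)) = fun t => nuList L (x⁻¹ * t * x) := by
  induction L with
  | nil => funext t; simp
  | cons u L ih =>
    funext t
    simp only [map_cons, nuList_cons, Pi.add_apply, ih, delta_conj]

/-- Conjugation action of `W` on `Multiplicative (W → ZMod 2)`. -/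
noncomputable def conjMul (w : W) :
    Multiplicative (W → ZMod 2) ≃* Multiplicative (W → ZMod 2) where
  toFun f := ofAdd (fun t => toAdd f (w⁻¹ * t * w))
  invFun f := ofAdd (fun t => toAdd f (w * t * w⁻¹))
  left_inv f := by
    simp only
    apply (Multiplicative.toAdd (α := W → ZMod 2)).injective
    funext t
    simp [mul_assoc]
  right_inv f := by
    simp only
    apply (Multiplicative.toAdd (α := W → ZMod 2)).injective
    funext t
    simp [mul_assoc]
  map_mul' f g := rfl

lemma conjMul_apply (w : W) (f : W → ZMod 2) :
    conjMul w (ofAdd f) = ofAdd (fun t => f (w⁻¹ * t * w)) := rfl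

/-- The conjugation action as a homomorphism to `MulAut`. -/
noncomputable def phiW : W →* MulAut (Multiplicative (W → ZMod 2)) where
  toFun := conjMul
  map_one' := by
    apply MulEquiv.ext
    intro f
    apply (Multiplicative.toAdd (α := W → ZMod 2)).injective
    funext t
    simp [conjMul]
  map_mul' x y := by
    apply MulEquiv.ext
    intro f
    apply (Multiplicative.toAdd (α := W → ZMod 2)).injective
    funext t
    show toAdd f ((x*y)⁻¹ * t * (x*y)) = toAdd f (y⁻¹ * (x⁻¹ * t * x) * y)
    congr 1
    group

/-- The auxiliary group: semidirect product of `ZMod 2`-valued functions with `W`. -/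
noncomputable abbrev NW (W : Type*) [Group W] : Type _ :=
  SemidirectProduct (Multiplicative (W → ZMod 2)) W phiW

lemma NW_pow_right (x : NW W) (m : ℕ) : (x ^ m).right = x.right ^ m := by
  induction m with
  | zero => simp
  | succ m ih => rw [pow_succ, pow_succ, SemidirectProduct.mul_right, ih]

lemma NW_pow_left (x : NW W) (m : ℕ) :
    (x ^ m).left = ∏ q ∈ Finset.range m, phiW (x.right ^ q) x.left := by
  induction m with
  | zero => simp
  | succ m ih =>
    rw [pow_succ, SemidirectProduct.mul_left, ih, Finset.prod_range_succ, NW_pow_right]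

end Cocycle

/-! ### The key dihedral computation -/

section Dihedral

variable {W : Type*} [Group W]

private lemma shift_sum {A : Type*} [AddCommGroup A] (m : ℕ) (c : ℕ) :
    ∀ (f : ℕ → A), (∀ q, f (q + m) = f q) →
    ∑ q ∈ Finset.range m, f (q + c) = ∑ q ∈ Finset.range m, f q := by
  induction c with
  | zero => intro f _; simp
  | succ c ih =>
    intro f hper
    have h1 : ∑ q ∈ Finset.range m, f (q + 1) = ∑ q ∈ Finset.range m, f q := by
      have h2 := Finset.sum_range_succ' f m
      have h3 : ∑ q ∈ Finset.range (m + 1), f q = ∑ q ∈ Finset.range m, f q + f m :=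
        Finset.sum_range_succ f m
      have h4 : f m = f 0 := by simpa using hper 0
      rw [h3, h4] at h2
      exact add_right_cancel h2.symm
    calc ∑ q ∈ Finset.range m, f (q + (c + 1))
        = ∑ q ∈ Finset.range m, (fun r => f (r + 1)) (q + c) := by
          refine Finset.sum_congr rfl (fun q _ => ?_)
          show f (q + (c + 1)) = f (q + c + 1)
          rw [← Nat.add_assoc]
      _ = ∑ q ∈ Finset.range m, f (q + 1) :=
          ih (fun r => f (r + 1)) (fun q => by
            show f (q + m + 1) = f (q + 1)
            rw [show q + m + 1 = q + 1 + m by omega]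
            exact hper (q + 1))
      _ = ∑ q ∈ Finset.range m, f q := h1

private lemma double_sum_zero {A : Type*} (f : ℕ → (A → ZMod 2)) (e : ℕ)
    (hh : ∀ q, f (q + e) = f q) :
    ∑ q ∈ Finset.range (e + e), f q = 0 := by
  rw [Finset.sum_range_add]
  have h : ∀ q ∈ Finset.range e, f (e + q) = f q := by
    intro q _; rw [add_comm]; exact hh q
  rw [Finset.sum_congr rfl h]
  funext t
  simp only [Pi.add_apply, Pi.zero_apply, Finset.sum_apply]
  exact CharTwo.add_self_eq_zero _

/-- The key dihedral cancellation. -/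
lemma sum_delta_pair (s t : W) (hs : s * s = 1) (ht : t * t = 1) (m : ℕ)
    (hm : (s * t) ^ m = 1) :
    ∑ q ∈ Finset.range m,
      (delta ((s*t)^q * s * ((s*t)^q)⁻¹) + delta ((s*t)^q * (s*t*s) * ((s*t)^q)⁻¹))
      = (0 : W → ZMod 2) := by
  set p := s * t with hp
  have hsinv : s⁻¹ = s := inv_eq_of_mul_eq_one_right hs
  have htinv : t⁻¹ = t := inv_eq_of_mul_eq_one_right ht
  have hspsn : ∀ n : ℕ, s * p ^ n * s = (p ^ n)⁻¹ := by
    intro n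
    have hsps : s * p * s⁻¹ = p⁻¹ := by
      rw [hsinv, hp]
      calc s * (s * t) * s = (s * s) * (t * s) := by group
        _ = t * s := by rw [hs, one_mul]
        _ = (s * t)⁻¹ := by rw [mul_inv_rev, hsinv, htinv]
    calc s * p ^ n * s = s * p ^ n * s⁻¹ := by rw [hsinv]
      _ = (s * p * s⁻¹) ^ n := by rw [conj_pow]
      _ = (p⁻¹) ^ n := by rw [hsps]
      _ = (p ^ n)⁻¹ := by rw [inv_pow]
  have htptn : ∀ n : ℕ, t * p ^ n * t = (p ^ n)⁻¹ := by
    intro n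
    have htpt : t * p * t⁻¹ = p⁻¹ := by
      rw [htinv, hp]
      calc t * (s * t) * t = (t * s) * (t * t) := by group
        _ = t * s := by rw [ht, mul_one]
        _ = (s * t)⁻¹ := by rw [mul_inv_rev, hsinv, htinv]
    calc t * p ^ n * t = t * p ^ n * t⁻¹ := by rw [htinv]
      _ = (t * p * t⁻¹) ^ n := by rw [conj_pow]
      _ = (p⁻¹) ^ n := by rw [htpt]
      _ = (p ^ n)⁻¹ := by rw [inv_pow]
  -- commutation rules
  have cs1 : ∀ n : ℕ, p ^ n * s = s * (p ^ n)⁻¹ := by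
    intro n
    calc p ^ n * s = (s * s) * p ^ n * s := by rw [hs, one_mul]
      _ = s * (s * p ^ n * s) := by group
      _ = s * (p ^ n)⁻¹ := by rw [hspsn]
  have cs2 : ∀ n : ℕ, (p ^ n)⁻¹ * s = s * p ^ n := by
    intro n
    calc (p ^ n)⁻¹ * s = (p ^ n)⁻¹ * (s * (p ^ n)⁻¹) * p ^ n := by group
      _ = (p ^ n)⁻¹ * (p ^ n * s) * p ^ n := by rw [← cs1]
      _ = s * p ^ n := by group
  have ct2 : ∀ n : ℕ, (p ^ n)⁻¹ * t = t * p ^ n := by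
    intro n
    have ct1 : p ^ n * t = t * (p ^ n)⁻¹ := by
      calc p ^ n * t = (t * t) * p ^ n * t := by rw [ht, one_mul]
        _ = t * (t * p ^ n * t) := by group
        _ = t * (p ^ n)⁻¹ := by rw [htptn]
    calc (p ^ n)⁻¹ * t = (p ^ n)⁻¹ * (t * (p ^ n)⁻¹) * p ^ n := by group
      _ = (p ^ n)⁻¹ * (p ^ n * t) * p ^ n := by rw [← ct1]
      _ = t * p ^ n := by group
  -- conjugating s by p^e
  have conj_s : ∀ e : ℕ, p ^ e * s * (p ^ e)⁻¹ = s * (p ^ (e + e))⁻¹ := by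
    intro e
    calc p ^ e * s * (p ^ e)⁻¹ = (s * (p ^ e)⁻¹) * (p ^ e)⁻¹ := by rw [cs1]
      _ = s * ((p ^ e) * (p ^ e))⁻¹ := by group
      _ = s * (p ^ (e + e))⁻¹ := by rw [pow_add]
  -- conjugating s*t*s by p^e
  have conj_sts : ∀ e : ℕ, p ^ e * (s * t * s) * (p ^ e)⁻¹ = s * t * s * (p ^ (e+e))⁻¹ * (p ^ (e+e)) * (p ^ (e+e))⁻¹ := by
    intro e
    calc p ^ e * (s * t * s) * (p ^ e)⁻¹
        = (p ^ e * s) * t * (s * (p ^ e)⁻¹) := by group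
      _ = (s * (p ^ e)⁻¹) * t * (s * (p ^ e)⁻¹) := by rw [cs1]
      _ = s * ((p ^ e)⁻¹ * t) * (s * (p ^ e)⁻¹) := by group
      _ = s * (t * p ^ e) * (s * (p ^ e)⁻¹) := by rw [ct2]
      _ = s * t * (p ^ e * s) * (p ^ e)⁻¹ := by group
      _ = s * t * (s * (p ^ e)⁻¹) * (p ^ e)⁻¹ := by rw [cs1]
      _ = s * t * s * ((p ^ e) * (p ^ e))⁻¹ := by group
      _ = s * t * s * (p ^ (e+e))⁻¹ := by rw [pow_add]
      _ = s * t * s * (p ^ (e+e))⁻¹ * (p ^ (e+e)) * (p ^ (e+e))⁻¹ := by group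
  have conj_sts' : ∀ e : ℕ, p ^ e * (s * t * s) * (p ^ e)⁻¹ = s * t * s * (p ^ (e+e))⁻¹ := by
    intro e
    rw [conj_sts e]; group
  -- the sequences
  have hpera : ∀ q, (fun q => delta (p ^ q * s * (p ^ q)⁻¹) : ℕ → W → ZMod 2) (q + m)
      = (fun q => delta (p ^ q * s * (p ^ q)⁻¹)) q := by
    intro q; simp only; rw [pow_add, hm, mul_one]
  rcases Nat.even_or_odd m with ⟨e, he⟩ | ⟨e, he⟩
  · -- even case : m = e + e
    subst he
    have hpe : (p ^ (e + e)) = 1 := hm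
    have haa : ∀ q : ℕ, delta (p ^ (q + e) * s * (p ^ (q + e))⁻¹)
        = delta (p ^ q * s * (p ^ q)⁻¹) := by
      intro q
      refine congrArg delta ?_
      calc p ^ (q + e) * s * (p ^ (q + e))⁻¹
          = p ^ q * (p ^ e * s * (p ^ e)⁻¹) * (p ^ q)⁻¹ := by rw [pow_add]; group
        _ = p ^ q * (s * (p ^ (e+e))⁻¹) * (p ^ q)⁻¹ := by rw [conj_s]
        _ = p ^ q * s * (p ^ q)⁻¹ := by rw [hpe]; group
    have hbb : ∀ q : ℕ, delta (p ^ (q + e) * (s*t*s) * (p ^ (q + e))⁻¹)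
        = delta (p ^ q * (s*t*s) * (p ^ q)⁻¹) := by
      intro q
      refine congrArg delta ?_
      calc p ^ (q + e) * (s*t*s) * (p ^ (q + e))⁻¹
          = p ^ q * (p ^ e * (s*t*s) * (p ^ e)⁻¹) * (p ^ q)⁻¹ := by rw [pow_add]; group
        _ = p ^ q * (s * t * s * (p ^ (e+e))⁻¹) * (p ^ q)⁻¹ := by rw [conj_sts']
        _ = p ^ q * (s*t*s) * (p ^ q)⁻¹ := by rw [hpe]; group
    rw [Finset.sum_add_distrib]
    rw [double_sum_zero _ e haa, double_sum_zero _ e hbb, add_zero]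
  · -- odd case : m = 2e + 1
    have hba : ∀ q : ℕ, delta (p ^ q * (s*t*s) * (p ^ q)⁻¹)
        = delta (p ^ (q + e + 1) * s * (p ^ (q + e + 1))⁻¹) := by
      intro q
      refine congrArg delta ?_
      have h2 : p ^ (e + 1) * s * (p ^ (e + 1))⁻¹ = s * t * s := by
        rw [conj_s (e + 1)]
        have h3 : (e + 1) + (e + 1) = m + 1 := by omega
        rw [h3, pow_succ, hm, one_mul]
        calc s * (p)⁻¹ = s * (t * s) := by
              rw [hp, mul_inv_rev, hsinv, htinv]
          _ = s * t * s := by group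
      calc p ^ q * (s*t*s) * (p ^ q)⁻¹
          = p ^ q * (p ^ (e+1) * s * (p ^ (e+1))⁻¹) * (p ^ q)⁻¹ := by rw [h2]
        _ = p ^ (q + e + 1) * s * (p ^ (q + e + 1))⁻¹ := by
            rw [show q + e + 1 = q + (e + 1) by omega, pow_add]; group
    rw [Finset.sum_add_distrib]
    have hb_eq : (∑ q ∈ Finset.range m, delta (p ^ q * (s*t*s) * (p ^ q)⁻¹) : W → ZMod 2)
        = ∑ q ∈ Finset.range m, delta (p ^ q * s * (p ^ q)⁻¹) := by
      rw [Finset.sum_congr rfl (fun q _ => hba q)]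
      calc (∑ q ∈ Finset.range m, delta (p ^ (q + e + 1) * s * (p ^ (q + e + 1))⁻¹) : W → ZMod 2)
          = ∑ q ∈ Finset.range m,
              (fun r => delta (p ^ r * s * (p ^ r)⁻¹) : ℕ → W → ZMod 2) (q + (e + 1)) := by
            apply Finset.sum_congr rfl; intro q _; simp only
            rw [show q + (e + 1) = q + e + 1 by omega]
        _ = ∑ q ∈ Finset.range m, delta (p ^ q * s * (p ^ q)⁻¹) := by
            exact shift_sum m (e + 1) (fun r => delta (p ^ r * s * (p ^ r)⁻¹)) hpera
    rw [hb_eq]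
    funext x
    simp only [Pi.add_apply, Pi.zero_apply, Finset.sum_apply]
    exact CharTwo.add_self_eq_zero _

end Dihedral

/-! ### The cocycle for a Coxeter system, and the exchange property -/

section Exchange

variable {B : Type*} {W : Type*} [Group W] {M : CoxeterMatrix B} (cs : CoxeterSystem M W)

local prefix:100 "π" => cs.wordProd
local prefix:100 "ℓ" => cs.length

/-- The generators of the cocycle group. -/
noncomputable def gen (i : B) : NW W :=
  ⟨Multiplicative.ofAdd (delta (cs.simple i)), cs.simple i⟩

lemma phiW_ofAdd (x : W) (f : W → ZMod 2) :
    phiW x (Multiplicative.ofAdd f) = Multiplicative.ofAdd (fun t => f (x⁻¹ * t * x)) := rfl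

lemma gen_isLiftable : M.IsLiftable (gen cs) := by
  intro i j
  set si := cs.simple i
  set sj := cs.simple j
  have hmul : gen cs i * gen cs j
      = ⟨Multiplicative.ofAdd (delta si + delta (si * sj * si)), si * sj⟩ := by
    apply SemidirectProduct.ext
    · show Multiplicative.ofAdd (delta si) * phiW si (Multiplicative.ofAdd (delta sj)) = _
      rw [phiW_ofAdd]
      show Multiplicative.ofAdd (delta si + fun t => delta sj (si⁻¹ * t * si)) = _
      congr 1
      funext t
      simp only [Pi.add_apply]
      rw [← delta_conj si sj t, cs.inv_simple]
    · rfl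
  apply SemidirectProduct.ext
  · rw [hmul, NW_pow_left]
    show _ = Multiplicative.ofAdd (0 : W → ZMod 2)
    rw [← sum_delta_pair si sj (cs.simple_mul_simple_self i) (cs.simple_mul_simple_self j)
      (M i j) (cs.simple_mul_simple_pow i j), ofAdd_sum]
    refine Finset.prod_congr rfl (fun q _ => ?_)
    show phiW ((si * sj) ^ q) (Multiplicative.ofAdd (delta si + delta (si * sj * si))) = _
    rw [phiW_ofAdd]
    congr 1
    funext u
    simp only [Pi.add_apply]
    rw [← delta_conj ((si * sj) ^ q) si u, ← delta_conj ((si * sj) ^ q) (si * sj * si) u]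
  · rw [hmul, NW_pow_right]
    show (si * sj) ^ M i j = 1
    exact cs.simple_mul_simple_pow i j

/-- The cocycle homomorphism. -/
noncomputable def nu : W →* NW W := cs.lift ⟨gen cs, gen_isLiftable cs⟩

lemma nu_simple (i : B) : nu cs (cs.simple i) = gen cs i :=
  cs.lift_apply_simple (gen_isLiftable cs) i

/-- `ZMod 2`-valued count of reflections in the left inversion sequence. -/
noncomputable def nuF (w : W) : W → ZMod 2 := Multiplicative.toAdd (nu cs w).left

lemma nuF_wordProd (ω : List B) : nuF cs (π ω) = nuList (cs.leftInvSeq ω) := by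
  induction ω with
  | nil =>
    show Multiplicative.toAdd (nu cs (π ([] : List B))).left = _
    rw [cs.wordProd_nil, map_one]
    rfl
  | cons i ω ih =>
    have h1 : nu cs (π (i :: ω)) = gen cs i * nu cs (π ω) := by
      rw [cs.wordProd_cons, map_mul, nu_simple]
    show Multiplicative.toAdd (nu cs (π (i :: ω))).left = _
    rw [h1, SemidirectProduct.mul_left]
    have h2 : (nu cs (π ω)).left = Multiplicative.ofAdd (nuList (cs.leftInvSeq ω)) := by
      rw [← ih]; rfl
    have h3 : cs.leftInvSeq (i :: ω)
        = cs.simple i :: List.map (⇑(MulAut.conj (cs.simple i))) (cs.leftInvSeq ω) := rfl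
    rw [h3, nuList_cons, h2]
    show delta (cs.simple i) + (fun t => nuList (cs.leftInvSeq ω) ((cs.simple i)⁻¹ * t * cs.simple i)) = _
    have h4 : List.map (⇑(MulAut.conj (cs.simple i))) (cs.leftInvSeq ω)
        = List.map (fun u => cs.simple i * u * (cs.simple i)⁻¹) (cs.leftInvSeq ω) := by
      refine List.map_congr_left (fun u _ => ?_)
      rw [MulAut.conj_apply]
    rw [h4, nuList_conj]

/-- The (simple) exchange property. -/
lemma exchange {ω : List B} (hred : cs.IsReduced ω) (i : B)
    (hlt : ℓ (cs.simple i * π ω) < ℓ (π ω)) :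
    ∃ k, k < ω.length ∧ cs.simple i * π ω = π (ω.eraseIdx k) := by
  -- first : nuF (π ω) (s i) = 1
  obtain ⟨α, hαred, hαeq⟩ := cs.exists_reduced_word' (cs.simple i * π ω)
  have hπα : π (i :: α) = π ω := by
    rw [cs.wordProd_cons, ← hαeq, ← mul_assoc, cs.simple_mul_simple_self, one_mul]
  have hms : nuList (cs.leftInvSeq α) (cs.simple i) = 0 := by
    by_contra h
    have hmem := mem_of_nuList_ne_zero h
    have hinv := cs.isLeftInversion_of_mem_leftInvSeq hαred hmem
    have h6 := hinv.2
    rw [← hαeq, ← mul_assoc, cs.simple_mul_simple_self, one_mul] at h6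
    omega
  have hval : nuF cs (π ω) (cs.simple i) = 1 := by
    rw [← hπα, nuF_wordProd]
    have h3 : cs.leftInvSeq (i :: α)
        = cs.simple i :: List.map (⇑(MulAut.conj (cs.simple i))) (cs.leftInvSeq α) := rfl
    rw [h3, nuList_cons]
    have h4 : List.map (⇑(MulAut.conj (cs.simple i))) (cs.leftInvSeq α)
        = List.map (fun u => cs.simple i * u * (cs.simple i)⁻¹) (cs.leftInvSeq α) := by
      refine List.map_congr_left (fun u _ => ?_)
      rw [MulAut.conj_apply]
    rw [h4]
    simp only [Pi.add_apply, nuList_conj, delta_self]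
    have h6 : (cs.simple i)⁻¹ * cs.simple i * cs.simple i = cs.simple i := by
      simp
    rw [h6, hms, add_zero]
  -- hence s i occurs in the left inversion sequence of ω
  have hmem : cs.simple i ∈ cs.leftInvSeq ω := by
    apply mem_of_nuList_ne_zero
    rw [← nuF_wordProd, hval]
    exact one_ne_zero
  obtain ⟨k, hk, hget⟩ := List.mem_iff_getElem.mp hmem
  have hk' : k < ω.length := by rwa [cs.length_leftInvSeq] at hk
  refine ⟨k, hk', ?_⟩
  have h7 := cs.getD_leftInvSeq_mul_wordProd ω k
  rw [List.getD_eq_getElem _ _ hk, hget] at h7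
  exact h7

end Exchange

/-! ### Alternating words and the descent lemma -/

section Descent

variable {B : Type*} {W : Type*} [Group W] {M : CoxeterMatrix B} (cs : CoxeterSystem M W)

local prefix:100 "π" => cs.wordProd
local prefix:100 "ℓ" => cs.length

open CoxeterSystem

lemma getElem_alternatingWord (i j : B) (m : ℕ) (r : ℕ) (h : r < m) :
    (alternatingWord i j m)[r]'(by simp [h]) = if Even (m + r) then i else j := by
  induction m generalizing r with
  | zero => omega
  | succ m ih =>
    have hsucc := CoxeterSystem.alternatingWord_succ' i j m
    rcases r with _ | r
    · rw [List.getElem_of_eq hsucc (by simp)]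
      simp only [List.getElem_cons_zero]
      by_cases hm : Even m
      · rw [if_pos hm, if_neg (by simpa [Nat.even_add_one, Nat.even_iff] using hm)]
      · rw [if_neg hm, if_pos (by simp [Nat.even_add_one, Nat.even_iff] at hm ⊢; omega)]
    · have hr : r < m := by omega
      rw [List.getElem_of_eq hsucc (by simp; omega)]
      simp only [List.getElem_cons_succ]
      rw [ih r hr]
      have hiff : Even (m + r) ↔ Even (m + 1 + (r + 1)) := by
        rw [Nat.even_iff, Nat.even_iff]; omega
      by_cases hp : Even (m + r)
      · rw [if_pos hp, if_pos (hiff.mp hp)]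
      · rw [if_neg hp, if_neg (fun hc => hp (hiff.mpr hc))]

lemma length_lt_of_adjacent_eq {χ : List B} {a : ℕ} (h : a + 1 < χ.length)
    (heq : χ[a]'(by omega) = χ[a+1]'h) : ℓ (π χ) < χ.length := by
  have hsplit : χ = χ.take a ++ χ.drop a := (List.take_append_drop a χ).symm
  have hdrop : χ.drop a = χ[a]'(by omega) :: χ[a+1]'h :: χ.drop (a + 2) := by
    rw [List.drop_eq_getElem_cons (by omega : a < χ.length)]
    congr 1
    exact List.drop_eq_getElem_cons h
  have hπ : π χ = π (χ.take a ++ χ.drop (a + 2)) := by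
    conv_lhs => rw [hsplit]
    rw [cs.wordProd_append, cs.wordProd_append, hdrop, cs.wordProd_cons, cs.wordProd_cons,
      heq, cs.simple_mul_simple_cancel_left]
  have hlen : (χ.take a ++ χ.drop (a + 2)).length = χ.length - 2 := by
    rw [List.length_append, List.length_take, List.length_drop]
    omega
  have := cs.length_wordProd_le (χ.take a ++ χ.drop (a + 2))
  rw [← hπ] at this
  omega

lemma braid_eq_iff (i j : B) (d : ℕ) :
    π (alternatingWord i j d) = π (alternatingWord j i d)
      ↔ (cs.simple i * cs.simple j) ^ d = 1 := by
  set si := cs.simple i with hsi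
  set sj := cs.simple j with hsj
  have h1 := cs.prod_alternatingWord_eq_mul_pow i j d
  have h2 := cs.prod_alternatingWord_eq_mul_pow j i d
  rw [← hsi, ← hsj] at h1 h2
  have hji : (sj * si) ^ (d / 2) = ((si * sj) ^ (d / 2))⁻¹ := by
    rw [← inv_pow]
    congr 1
    rw [mul_inv_rev, hsi, hsj, cs.inv_simple, cs.inv_simple]
  rcases Nat.even_or_odd d with hev | hodd
  · have hdd : d / 2 + d / 2 = d := by
      rw [Nat.even_iff] at hev; omega
    rw [h1, h2, if_pos hev, if_pos hev, one_mul, one_mul, hji,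
      ← mul_eq_one_iff_eq_inv, ← pow_add, hdd]
  · have hnev : ¬ Even d := by
      rw [Nat.not_even_iff_odd]; exact hodd
    have hdd : d / 2 + 1 + d / 2 = d := by
      rw [Nat.odd_iff] at hodd; omega
    rw [h1, h2, if_neg hnev, if_neg hnev, hji]
    constructor
    · intro h
      have h3 : si * (sj * (si * sj) ^ (d / 2)) = si * (si * ((si * sj) ^ (d / 2))⁻¹) := by
        rw [h]
      rw [← mul_assoc, ← mul_assoc, cs.simple_mul_simple_self, one_mul] at h3
      have h4 : (si * sj) ^ (d / 2 + 1 + d / 2)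
          = ((si * sj) ^ (d / 2))⁻¹ * (si * sj) ^ (d / 2) := by
        rw [pow_add, pow_succ', h3]
      rw [hdd] at h4
      rw [h4, inv_mul_cancel]
    · intro h
      have h6 : (si * sj) ^ (d / 2 + 1) * (si * sj) ^ (d / 2) = 1 := by
        rw [← pow_add, hdd, h]
      have h5 : (si * sj) * (si * sj) ^ (d / 2) = ((si * sj) ^ (d / 2))⁻¹ := by
        have h7 := mul_eq_one_iff_eq_inv.mp h6
        rwa [pow_succ'] at h7
      have hss : si * si = 1 := by rw [hsi]; exact cs.simple_mul_simple_self i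
      calc sj * (si * sj) ^ (d / 2)
          = si * (si * (sj * (si * sj) ^ (d / 2))) := by
            rw [← mul_assoc, ← mul_assoc, hss, one_mul]
        _ = si * ((si * sj) * (si * sj) ^ (d / 2)) := by group
        _ = si * ((si * sj) ^ (d / 2))⁻¹ := by rw [h5]

lemma descent_prefix {w : W} (i j : B) (hne : cs.simple i ≠ cs.simple j)
    (hi : ℓ (cs.simple i * w) < ℓ w) (hj : ℓ (cs.simple j * w) < ℓ w) :
    orderOf (cs.simple i * cs.simple j) ≠ 0 ∧
    ∃ δ : List B,
      π (alternatingWord j i (orderOf (cs.simple i * cs.simple j)) ++ δ) = w ∧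
      (alternatingWord j i (orderOf (cs.simple i * cs.simple j)) ++ δ).length = ℓ w := by
  have climb : ∀ d : ℕ, 1 ≤ d →
      (∀ e, 1 ≤ e → e < d → (cs.simple i * cs.simple j) ^ e ≠ 1) →
      ∃ δ : List B, π (alternatingWord j i d ++ δ) = w ∧
        (alternatingWord j i d ++ δ).length = ℓ w := by
    intro d
    induction d with
    | zero => omega
    | succ d ihd =>
      intro _ hrel
      rcases Nat.eq_zero_or_pos d with hd0 | hd1
      · -- base case d + 1 = 1
        subst hd0
        obtain ⟨α, hαred, hαeq⟩ := cs.exists_reduced_word' (cs.simple i * w)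
        have hone : alternatingWord j i 1 = [i] := rfl
        have hαlen : α.length = ℓ (cs.simple i * w) := by
          have h0 := hαred
          unfold CoxeterSystem.IsReduced at h0
          rw [← hαeq] at h0
          omega
        have hlw : ℓ (cs.simple i * w) + 1 = ℓ w := by
          rcases cs.length_simple_mul w i with hc | hc
          · omega
          · exact hc
        refine ⟨α, ?_, ?_⟩
        · rw [hone, List.cons_append, List.nil_append, cs.wordProd_cons, ← hαeq,
            ← mul_assoc, cs.simple_mul_simple_self, one_mul]
        · rw [hone]
          simp only [List.cons_append, List.nil_append, List.length_cons]
          omega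
      · -- inductive step
        obtain ⟨e, rfl⟩ : ∃ e, d = e + 1 := ⟨d - 1, by omega⟩
        obtain ⟨δ, hπ, hlen⟩ := ihd hd1 (fun e' h1 h2 => hrel e' h1 (by omega))
        have hAlen : (alternatingWord j i (e+1)).length = e + 1 :=
          CoxeterSystem.length_alternatingWord j i (e+1)
        have hχ₀red : cs.IsReduced (alternatingWord j i (e+1) ++ δ) := by
          show ℓ (π (alternatingWord j i (e+1) ++ δ)) = _
          rw [hπ, hlen]
        have hyd : ℓ (cs.simple (if Even (e+1) then i else j) * w) < ℓ w := by
          split <;> assumption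
        obtain ⟨k, hk, hke⟩ := exchange cs hχ₀red (if Even (e+1) then i else j)
          (by rw [hπ]; exact hyd)
        rw [hπ] at hke
        have hχπ : π ((if Even (e+1) then i else j) :: (alternatingWord j i (e+1) ++ δ).eraseIdx k) = w := by
          rw [cs.wordProd_cons, ← hke, ← mul_assoc, cs.simple_mul_simple_self, one_mul]
        rw [List.length_append, hAlen] at hk hlen
        have hχlen : ((if Even (e+1) then i else j) :: (alternatingWord j i (e+1) ++ δ).eraseIdx k).length = ℓ w := by
          have h9 : ((alternatingWord j i (e+1) ++ δ).eraseIdx k).length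
              = e + 1 + δ.length - 1 := by
            rw [List.length_eraseIdx, List.length_append, hAlen]
            simp [hk]
          simp only [List.length_cons, h9]
          omega
        by_cases hkd : e + 1 ≤ k
        · -- the erased letter is in δ : extend the alternating prefix
          have hsplit : (alternatingWord j i (e+1) ++ δ).eraseIdx k
              = alternatingWord j i (e+1) ++ δ.eraseIdx (k - (e+1)) := by
            rw [List.eraseIdx_append_of_length_le (by omega) δ, hAlen]
          have hcons : alternatingWord j i (e+1+1)
              = (if Even (e+1) then i else j) :: alternatingWord j i (e+1) :=
            CoxeterSystem.alternatingWord_succ' j i (e+1)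
          refine ⟨δ.eraseIdx (k - (e+1)), ?_, ?_⟩
          · rw [hcons, List.cons_append, ← hsplit]
            exact hχπ
          · rw [hcons, List.cons_append, ← hsplit]
            rw [List.length_cons] at hχlen ⊢
            exact hχlen
        · -- the erased letter is in the alternating prefix
          have hkd' : k < e + 1 := by omega
          have herase : (alternatingWord j i (e+1) ++ δ).eraseIdx k
              = (alternatingWord j i (e+1)).eraseIdx k ++ δ :=
            List.eraseIdx_append_of_lt_length (by omega) δ
          exfalso
          rw [herase] at hχπ hχlen
          by_cases hlast : k = e
          · -- bounce : gives a braid relation of length e+1, contradiction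
            have hAerase : (alternatingWord j i (e+1)).eraseIdx k = alternatingWord i j e := by
              rw [hlast]
              have hconcat : alternatingWord j i (e+1) = alternatingWord i j e ++ [i] := by
                rw [CoxeterSystem.alternatingWord_succ j i e, List.concat_eq_append]
              rw [hconcat,
                List.eraseIdx_append_of_length_le
                  (by rw [CoxeterSystem.length_alternatingWord]) [i],
                CoxeterSystem.length_alternatingWord]
              simp
            have hyy : (if Even (e+1) then i else j) = (if Even e then j else i) := by
              by_cases he : Even e
              · rw [if_neg (by simp [Nat.even_add_one, he]), if_pos he]
              · rw [if_pos (by simp [Nat.even_add_one, he]), if_neg he]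
            have h10 : (if Even (e+1) then i else j) :: (alternatingWord i j e ++ δ)
                = alternatingWord i j (e+1) ++ δ := by
              rw [hyy, CoxeterSystem.alternatingWord_succ' i j e, List.cons_append]
            rw [hAerase, h10] at hχπ
            have hbr2 : π (alternatingWord i j (e+1)) * π δ
                = π (alternatingWord j i (e+1)) * π δ := by
              rw [← cs.wordProd_append, ← cs.wordProd_append, hχπ, hπ]
            have hbr := mul_right_cancel hbr2
            exact hrel (e+1) (by omega) (by omega) ((braid_eq_iff cs i j (e+1)).mp hbr)
          · -- k ≤ e - 1 : two adjacent equal letters appear, contradiction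
            have hke2 : k < e := by omega
            have hELen : ((alternatingWord j i (e+1)).eraseIdx k).length = e := by
              rw [List.length_eraseIdx, hAlen]
              simp [hkd']
            have hχL : ((if Even (e+1) then i else j) ::
                ((alternatingWord j i (e+1)).eraseIdx k ++ δ)).length = 1 + e + δ.length := by
              rw [List.length_cons, List.length_append, hELen]
              omega
            have hparity : ∀ (r₁ r₂ : ℕ) (h₁ : r₁ < e + 1) (h₂ : r₂ < e + 1),
                (r₁ % 2 = r₂ % 2) →
                (alternatingWord j i (e+1))[r₁]'(by simp [h₁]) =
                (alternatingWord j i (e+1))[r₂]'(by simp [h₂]) := by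
              intro r₁ r₂ h₁ h₂ hmod
              rw [getElem_alternatingWord j i (e+1) r₁ h₁, getElem_alternatingWord j i (e+1) r₂ h₂]
              have : Even (e + 1 + r₁) ↔ Even (e + 1 + r₂) := by
                rw [Nat.even_iff, Nat.even_iff]; omega
              by_cases hp : Even (e + 1 + r₁)
              · rw [if_pos hp, if_pos (this.mp hp)]
              · rw [if_neg hp, if_neg (fun hc => hp (this.mpr hc))]
            rcases Nat.eq_zero_or_pos k with hk0 | hkpos
            · -- k = 0
              subst hk0
              have he1 : 1 ≤ e := by omega
              set χ := (if Even (e+1) then i else j) ::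
                ((alternatingWord j i (e+1)).eraseIdx 0 ++ δ) with hχ
              have hadj : χ[0]'(by rw [hχL]; omega) = χ[1]'(by rw [hχL]; omega) := by
                show (if Even (e+1) then i else j) = _
                have h11 : χ[1]'(by rw [hχL]; omega)
                    = ((alternatingWord j i (e+1)).eraseIdx 0 ++ δ)[0]'(by
                        rw [List.length_append, hELen]; omega) := rfl
                have h12 : ((alternatingWord j i (e+1)).eraseIdx 0 ++ δ)[0]'(by
                        rw [List.length_append, hELen]; omega)
                    = ((alternatingWord j i (e+1)).eraseIdx 0)[0]'(by rw [hELen]; omega) :=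
                  List.getElem_append_left (by rw [hELen]; omega)
                have h13 : ((alternatingWord j i (e+1)).eraseIdx 0)[0]'(by rw [hELen]; omega)
                    = (alternatingWord j i (e+1))[1]'(by rw [hAlen]; omega) :=
                  List.getElem_eraseIdx_of_ge _ (by omega)
                have h14 : (alternatingWord j i (e+1))[1]'(by rw [hAlen]; omega)
                    = if Even (e + 1 + 1) then j else i :=
                  getElem_alternatingWord j i (e+1) 1 (by omega)
                rw [h11, h12, h13, h14]
                by_cases he : Even e
                · rw [if_neg (by simp [Nat.even_add_one, he]),
                    if_pos (by simp [Nat.even_add_one, Nat.even_iff] at he ⊢; omega)]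
                · rw [if_pos (by simp [Nat.even_add_one, he]),
                    if_neg (by simp [Nat.even_add_one, Nat.even_iff] at he ⊢; omega)]
              have hcontra := length_lt_of_adjacent_eq cs (by rw [hχL]; omega : (0:ℕ) + 1 < χ.length) hadj
              rw [hχπ, hχlen] at hcontra
              omega
            · -- k = k' + 1
              obtain ⟨k', rfl⟩ : ∃ k', k = k' + 1 := ⟨k - 1, by omega⟩
              set χ := (if Even (e+1) then i else j) ::
                ((alternatingWord j i (e+1)).eraseIdx (k'+1) ++ δ) with hχ
              have hbound : k' + 1 + 1 < χ.length := by rw [hχL]; omega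
              have hadj : χ[k'+1]'(by omega) = χ[k'+1+1]'hbound := by
                have h11 : χ[k'+1]'(by omega)
                    = ((alternatingWord j i (e+1)).eraseIdx (k'+1) ++ δ)[k']'(by
                        rw [List.length_append, hELen]; omega) := List.getElem_cons_succ ..
                have h12 : ((alternatingWord j i (e+1)).eraseIdx (k'+1) ++ δ)[k']'(by
                        rw [List.length_append, hELen]; omega)
                    = ((alternatingWord j i (e+1)).eraseIdx (k'+1))[k']'(by rw [hELen]; omega) :=
                  List.getElem_append_left (by rw [hELen]; omega)
                have h13 : ((alternatingWord j i (e+1)).eraseIdx (k'+1))[k']'(by rw [hELen]; omega)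
                    = (alternatingWord j i (e+1))[k']'(by rw [hAlen]; omega) :=
                  List.getElem_eraseIdx_of_lt _ (by omega)
                have h21 : χ[k'+1+1]'hbound
                    = ((alternatingWord j i (e+1)).eraseIdx (k'+1) ++ δ)[k'+1]'(by
                        rw [List.length_append, hELen]; omega) := List.getElem_cons_succ ..
                have h22 : ((alternatingWord j i (e+1)).eraseIdx (k'+1) ++ δ)[k'+1]'(by
                        rw [List.length_append, hELen]; omega)
                    = ((alternatingWord j i (e+1)).eraseIdx (k'+1))[k'+1]'(by rw [hELen]; omega) :=
                  List.getElem_append_left (by rw [hELen]; omega)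
                have h23 : ((alternatingWord j i (e+1)).eraseIdx (k'+1))[k'+1]'(by rw [hELen]; omega)
                    = (alternatingWord j i (e+1))[k'+1+1]'(by rw [hAlen]; omega) :=
                  List.getElem_eraseIdx_of_ge _ (by omega)
                rw [h11, h12, h13, h21, h22, h23]
                exact hparity k' (k'+1+1) (by omega) (by omega) (by omega)
              have hcontra := length_lt_of_adjacent_eq cs hbound hadj
              rw [hχπ, hχlen] at hcontra
              omega
  have hm0 : orderOf (cs.simple i * cs.simple j) ≠ 0 := by
    intro h0
    have hall := orderOf_eq_zero_iff'.mp h0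
    obtain ⟨δ, hπ, hlen⟩ := climb (ℓ w + 1) (by omega) (fun e' he' _ => hall e' he')
    rw [List.length_append, CoxeterSystem.length_alternatingWord] at hlen
    omega
  refine ⟨hm0, climb (orderOf (cs.simple i * cs.simple j)) (by omega) ?_⟩
  intro e' h1 h2 hcon
  have := orderOf_le_of_pow_eq_one h1 hcon
  omega

end Descent

/-! ### Products of fixed-length sublists -/

section SubProds

variable {B : Type*} {W : Type*} [Group W] {M : CoxeterMatrix B} (cs : CoxeterSystem M W)

local prefix:100 "π" => cs.wordProd
local prefix:100 "ℓ" => cs.length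

open CoxeterSystem

/-- The set of products of length-`k` sublists of `ω`. -/
def SubProds (ω : List B) (k : ℕ) : Set W :=
  {u | ∃ σ : List B, σ.Sublist ω ∧ σ.length = k ∧ π σ = u}

lemma mem_subProds_cons (i : B) (ω : List B) (k : ℕ) (u : W) :
    u ∈ SubProds cs (i :: ω) k ↔ u ∈ SubProds cs ω k ∨
      (∃ k' v, k = k' + 1 ∧ v ∈ SubProds cs ω k' ∧ u = cs.simple i * v) := by
  constructor
  · rintro ⟨σ, hs, hl, hp⟩
    rcases List.sublist_cons_iff.mp hs with h | ⟨r, rfl, hr⟩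
    · exact Or.inl ⟨σ, h, hl, hp⟩
    · right
      refine ⟨r.length, π r, ?_, ⟨r, hr, rfl, rfl⟩, ?_⟩
      · simp only [List.length_cons] at hl; omega
      · rw [← hp, cs.wordProd_cons]
  · rintro (⟨σ, hs, hl, hp⟩ | ⟨k', v, hk, ⟨σ, hs, hl, hp⟩, hu⟩)
    · exact ⟨σ, hs.cons i, hl, hp⟩
    · exact ⟨i :: σ, List.Sublist.cons₂ i hs, by simp [hl, hk],
        by rw [cs.wordProd_cons, hp, hu]⟩

lemma mem_subProds_append (χ δ : List B) (k : ℕ) (u : W) :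
    u ∈ SubProds cs (χ ++ δ) k ↔ ∃ a b, a + b = k ∧
      ∃ v z, v ∈ SubProds cs χ a ∧ z ∈ SubProds cs δ b ∧ u = v * z := by
  constructor
  · rintro ⟨σ, hs, hl, hp⟩
    obtain ⟨σ₁, σ₂, rfl, hs1, hs2⟩ := List.sublist_append_iff.mp hs
    exact ⟨σ₁.length, σ₂.length, by simpa using hl, π σ₁, π σ₂,
      ⟨σ₁, hs1, rfl, rfl⟩, ⟨σ₂, hs2, rfl, rfl⟩, by rw [← hp, cs.wordProd_append]⟩
  · rintro ⟨a, b, hab, v, z, ⟨σ₁, hs1, hl1, hp1⟩, ⟨σ₂, hs2, hl2, hp2⟩, rfl⟩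
    exact ⟨σ₁ ++ σ₂, List.Sublist.append hs1 hs2, by simp [hl1, hl2, hab],
      by rw [cs.wordProd_append, hp1, hp2]⟩

lemma mem_alternatingWord {c x y : B} {m : ℕ} (h : c ∈ alternatingWord x y m) :
    c = x ∨ c = y := by
  induction m with
  | zero => simp [CoxeterSystem.alternatingWord] at h
  | succ m ih =>
    rw [CoxeterSystem.alternatingWord_succ'] at h
    rcases List.mem_cons.mp h with h1 | h2
    · subst h1; split <;> simp
    · exact ih h2

/-- Absorbing a letter into an alternating word. -/
lemma absorb (x y c : B) (hxy : x ≠ y) (hc : c = x ∨ c = y) (d : ℕ) :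
    ∃ d' : ℕ, (d' = d + 1 ∨ d' + 1 = d) ∧
      (cs.simple c * π (alternatingWord x y d) = π (alternatingWord x y d') ∨
       cs.simple c * π (alternatingWord x y d) = π (alternatingWord y x d')) := by
  by_cases hcp : c = (if Even d then y else x)
  · refine ⟨d + 1, Or.inl rfl, Or.inl ?_⟩
    rw [CoxeterSystem.alternatingWord_succ' x y d, cs.wordProd_cons, hcp]
  · rcases Nat.eq_zero_or_pos d with hd0 | hd1
    · subst hd0
      rw [if_pos (by simp)] at hcp
      have hcx : c = x := by rcases hc with h | h; exact h; exact absurd h hcp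
      refine ⟨1, Or.inl rfl, Or.inr ?_⟩
      have h1 : alternatingWord y x 1 = [x] := rfl
      have h0 : alternatingWord x y 0 = [] := rfl
      rw [h1, h0, cs.wordProd_nil, mul_one, cs.wordProd_singleton, hcx]
    · obtain ⟨e, rfl⟩ : ∃ e, d = e + 1 := ⟨d - 1, by omega⟩
      have hcf : c = (if Even e then y else x) := by
        by_cases he : Even e
        · rw [if_neg (by simp [Nat.even_add_one, he])] at hcp
          rw [if_pos he]
          rcases hc with h | h
          · exact absurd h hcp
          · exact h
        · rw [if_pos (by simp [Nat.even_add_one, he])] at hcp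
          rw [if_neg he]
          rcases hc with h | h
          · exact h
          · exact absurd h hcp
      refine ⟨e, Or.inr rfl, Or.inl ?_⟩
      rw [CoxeterSystem.alternatingWord_succ' x y e, cs.wordProd_cons, ← hcf,
        ← mul_assoc, cs.simple_mul_simple_self, one_mul]

/-- Any word in two letters equals an alternating word of compatible length. -/
lemma word_reduces (i j : B) (hij : i ≠ j) (τ : List B)
    (hmem : ∀ c ∈ τ, c = i ∨ c = j) :
    ∃ d, d ≤ τ.length ∧ (τ.length - d) % 2 = 0 ∧
      (π τ = π (alternatingWord i j d) ∨ π τ = π (alternatingWord j i d)) := by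
  induction τ with
  | nil => exact ⟨0, le_refl 0, by simp, Or.inl rfl⟩
  | cons c τ' ih =>
    obtain ⟨d, hd, hpar, hor⟩ := ih (fun c' h => hmem c' (List.mem_cons_of_mem c h))
    have hc := hmem c (List.mem_cons_self)
    rcases hor with hp | hp
    · obtain ⟨d', hd', hor'⟩ := absorb cs i j c hij hc d
      refine ⟨d', by simp only [List.length_cons]; omega,
        by simp only [List.length_cons]; omega, ?_⟩
      rcases hor' with h | h
      · exact Or.inl (by rw [cs.wordProd_cons, hp, h])
      · exact Or.inr (by rw [cs.wordProd_cons, hp, h])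
    · obtain ⟨d', hd', hor'⟩ := absorb cs j i c hij.symm hc.symm d
      refine ⟨d', by simp only [List.length_cons]; omega,
        by simp only [List.length_cons]; omega, ?_⟩
      rcases hor' with h | h
      · exact Or.inr (by rw [cs.wordProd_cons, hp, h])
      · exact Or.inl (by rw [cs.wordProd_cons, hp, h])

/-- Alternating-word targets are realized by fixed-length sublists of longer
alternating words. -/
lemma alt_subprods : ∀ (m : ℕ) (i j : B), _root_.Ne i j → ∀ a d : ℕ, a < m → d ≤ a →
    (a - d) % 2 = 0 →
    (∃ σ, σ.Sublist (alternatingWord i j m) ∧ σ.length = a ∧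
      π σ = π (alternatingWord i j d)) ∧
    (∃ σ, σ.Sublist (alternatingWord i j m) ∧ σ.length = a ∧
      π σ = π (alternatingWord j i d)) := by
  intro m
  induction m with
  | zero => intro i j _ a d ha; omega
  | succ m ih =>
    intro i j hij a d ha hd hpar
    rcases Nat.lt_or_ge a m with ham | ham
    · obtain ⟨⟨σ₁, h₁s, h₁l, h₁p⟩, ⟨σ₂, h₂s, h₂l, h₂p⟩⟩ := ih i j hij a d ham hd hpar
      rw [CoxeterSystem.alternatingWord_succ' i j m]
      exact ⟨⟨σ₁, h₁s.cons _, h₁l, h₁p⟩, ⟨σ₂, h₂s.cons _, h₂l, h₂p⟩⟩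
    · have ham' : a = m := by omega
      subst ham'
      by_cases hdm : d = a
      · subst hdm
        constructor
        · refine ⟨alternatingWord i j d, ?_, CoxeterSystem.length_alternatingWord i j d, rfl⟩
          rw [CoxeterSystem.alternatingWord_succ' i j d]
          exact List.sublist_cons_self _ _
        · refine ⟨alternatingWord j i d, ?_, CoxeterSystem.length_alternatingWord j i d, rfl⟩
          rw [CoxeterSystem.alternatingWord_succ i j d, List.concat_eq_append]
          exact List.sublist_append_left _ _
      · have hd2 : d + 2 ≤ a := by omega
        have hm1 : 1 ≤ a := by omega
        have hc : (if Even a then j else i) = i ∨ (if Even a then j else i) = j := by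
          split
          · exact Or.inr rfl
          · exact Or.inl rfl
        have build : ∀ x y : B, ((x = i ∧ y = j) ∨ (x = j ∧ y = i)) →
            ∃ σ, σ.Sublist (alternatingWord i j (a+1)) ∧ σ.length = a ∧
              π σ = π (alternatingWord x y d) := by
          intro x y hxy
          have hxyne : x ≠ y := by
            rcases hxy with ⟨rfl, rfl⟩ | ⟨rfl, rfl⟩
            · exact hij
            · exact hij.symm
          have hcxy : (if Even a then j else i) = x ∨ (if Even a then j else i) = y := by
            rcases hxy with ⟨rfl, rfl⟩ | ⟨rfl, rfl⟩
            · exact hc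
            · exact hc.symm
          obtain ⟨d', hd', hor⟩ := absorb cs x y (if Even a then j else i) hxyne hcxy d
          have hIH := ih i j hij (a-1) d' (by omega) (by omega) (by omega)
          have hσ' : ∃ σ', σ'.Sublist (alternatingWord i j a) ∧ σ'.length = a - 1 ∧
              π σ' = cs.simple (if Even a then j else i) * π (alternatingWord x y d) := by
            rcases hor with h | h
            · rcases hxy with ⟨rfl, rfl⟩ | ⟨rfl, rfl⟩
              · obtain ⟨σ', hs, hl, hp⟩ := hIH.1; exact ⟨σ', hs, hl, by rw [hp, ← h]⟩
              · obtain ⟨σ', hs, hl, hp⟩ := hIH.2; exact ⟨σ', hs, hl, by rw [hp, ← h]⟩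
            · rcases hxy with ⟨rfl, rfl⟩ | ⟨rfl, rfl⟩
              · obtain ⟨σ', hs, hl, hp⟩ := hIH.2; exact ⟨σ', hs, hl, by rw [hp, ← h]⟩
              · obtain ⟨σ', hs, hl, hp⟩ := hIH.1; exact ⟨σ', hs, hl, by rw [hp, ← h]⟩
          obtain ⟨σ', hs, hl, hp⟩ := hσ'
          refine ⟨(if Even a then j else i) :: σ', ?_, ?_, ?_⟩
          · rw [CoxeterSystem.alternatingWord_succ' i j a]
            exact List.Sublist.cons₂ _ hs
          · simp only [List.length_cons, hl]; omega
          · rw [cs.wordProd_cons, hp, ← mul_assoc, cs.simple_mul_simple_self, one_mul]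
        exact ⟨build i j (Or.inl ⟨rfl, rfl⟩), build j i (Or.inr ⟨rfl, rfl⟩)⟩

/-- The braid-move invariance of sublist products. -/
lemma subProds_alt_swap (i j : B) (hij : i ≠ j) (m : ℕ)
    (hp : (cs.simple i * cs.simple j) ^ m = 1) (a : ℕ) :
    SubProds cs (alternatingWord i j m) a = SubProds cs (alternatingWord j i m) a := by
  have hdir : ∀ (x y : B), x ≠ y → (cs.simple x * cs.simple y) ^ m = 1 → ∀ u,
      u ∈ SubProds cs (alternatingWord x y m) a → u ∈ SubProds cs (alternatingWord y x m) a := by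
    intro x y hxy hpxy u hu
    rcases Nat.lt_trichotomy a m with ham | ham | ham
    · obtain ⟨σ, hs, hl, hp'⟩ := hu
      have hmem : ∀ c ∈ σ, c = x ∨ c = y := fun c hcm => mem_alternatingWord (hs.subset hcm)
      obtain ⟨d, hdle, hdpar, hor⟩ := word_reduces cs x y hxy σ hmem
      rw [hl] at hdle hdpar
      have hG := alt_subprods cs m y x hxy.symm a d ham hdle hdpar
      rcases hor with h | h
      · obtain ⟨σ', hs', hl', hp''⟩ := hG.2
        exact ⟨σ', hs', hl', by rw [hp'', ← h, hp']⟩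
      · obtain ⟨σ', hs', hl', hp''⟩ := hG.1
        exact ⟨σ', hs', hl', by rw [hp'', ← h, hp']⟩
    · subst ham
      obtain ⟨σ, hs, hl, hp'⟩ := hu
      have hfull : σ = alternatingWord x y a :=
        hs.eq_of_length (by rw [hl, CoxeterSystem.length_alternatingWord])
      refine ⟨alternatingWord y x a, List.Sublist.refl _,
        CoxeterSystem.length_alternatingWord y x a, ?_⟩
      rw [← hp', hfull]
      exact ((braid_eq_iff cs x y a).mpr hpxy).symm
    · obtain ⟨σ, hs, hl, hp'⟩ := hu
      have := hs.length_le
      rw [hl, CoxeterSystem.length_alternatingWord] at this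
      omega
  have hpji : (cs.simple j * cs.simple i) ^ m = 1 := by
    have h1 : cs.simple j * cs.simple i = (cs.simple i * cs.simple j)⁻¹ := by
      rw [mul_inv_rev, cs.inv_simple, cs.inv_simple]
    rw [h1, inv_pow, hp, inv_one]
  ext u
  exact ⟨hdir i j hij hp u, hdir j i hij.symm hpji u⟩

end SubProds

/-! ### Main theorem : invariance of sublist products over reduced words -/

section Main

variable {B : Type*} {W : Type*} [Group W] {M : CoxeterMatrix B} (cs : CoxeterSystem M W)

local prefix:100 "π" => cs.wordProd
local prefix:100 "ℓ" => cs.length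

open CoxeterSystem

theorem subProds_invariant : ∀ (n : ℕ) (ω₁ ω₂ : List B), ω₁.length ≤ n →
    cs.IsReduced ω₁ → cs.IsReduced ω₂ → π ω₁ = π ω₂ →
    ∀ k, SubProds cs ω₁ k = SubProds cs ω₂ k := by
  intro n
  induction n with
  | zero =>
    intro ω₁ ω₂ hlen h₁ h₂ heq k
    have e₂ : ℓ (π ω₂) = ω₂.length := h₂
    have hω₁ : ω₁ = [] := List.length_eq_zero_iff.mp (by omega)
    subst hω₁
    have h0 : ω₂.length = 0 := by
      rw [← heq, cs.wordProd_nil, cs.length_one] at e₂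
      omega
    rw [List.length_eq_zero_iff.mp h0]
  | succ n ih =>
    intro ω₁ ω₂ hlen h₁ h₂ heq
    have e₁ : ℓ (π ω₁) = ω₁.length := h₁
    have e₂ : ℓ (π ω₂) = ω₂.length := h₂
    have hL : ω₁.length = ω₂.length := by rw [heq] at e₁; omega
    rcases ω₁ with _ | ⟨i, α⟩
    · have hω₂ : ω₂ = [] := List.length_eq_zero_iff.mp (by simpa using hL.symm)
      rw [hω₂]
      intro k; rfl
    · rcases ω₂ with _ | ⟨j, β⟩
      · simp at hL
      · have hα : cs.IsReduced α := by
          have := CoxeterSystem.IsReduced.drop h₁ 1; simpa using this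
        have hβ : cs.IsReduced β := by
          have := CoxeterSystem.IsReduced.drop h₂ 1; simpa using this
        have eα : ℓ (π α) = α.length := hα
        have eβ : ℓ (π β) = β.length := hβ
        have hπ1 : π (i :: α) = cs.simple i * π α := cs.wordProd_cons i α
        have hπ2 : π (j :: β) = cs.simple j * π β := cs.wordProd_cons j β
        have hαlen : α.length ≤ n := by
          simp only [List.length_cons] at hlen; omega
        have hwlen : ℓ (π (i :: α)) = α.length + 1 := by
          simpa using e₁
        by_cases hss : cs.simple i = cs.simple j
        · -- same first letter
          have hπαβ : π α = π β := by
            have h3 := heq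
            rw [hπ1, hπ2, hss] at h3
            exact mul_left_cancel h3
          have hIH := ih α β hαlen hα hβ hπαβ
          intro k
          ext u
          rw [mem_subProds_cons, mem_subProds_cons, hss]
          simp only [hIH]
        · -- two distinct descents
          have hij : i ≠ j := fun h => hss (by rw [h])
          have hi : ℓ (cs.simple i * π (i :: α)) < ℓ (π (i :: α)) := by
            have h5 : cs.simple i * π (i :: α) = π α := by
              rw [hπ1, ← mul_assoc, cs.simple_mul_simple_self, one_mul]
            rw [h5, hwlen, eα]
            omega
          have hj : ℓ (cs.simple j * π (i :: α)) < ℓ (π (i :: α)) := by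
            have h6 : cs.simple j * π (i :: α) = π β := by
              rw [heq, hπ2, ← mul_assoc, cs.simple_mul_simple_self, one_mul]
            have hLβ : α.length = β.length := by
              simp only [List.length_cons] at hL; omega
            rw [h6, hwlen, eβ, hLβ]
            omega
          obtain ⟨hm0, δ, hX, hXlen⟩ := descent_prefix cs i j hss hi hj
          have hpm : (cs.simple i * cs.simple j) ^ orderOf (cs.simple i * cs.simple j) = 1 :=
            pow_orderOf_eq_one _
          obtain ⟨m0, hm0'⟩ : ∃ m0, orderOf (cs.simple i * cs.simple j) = m0 + 1 :=
            ⟨orderOf (cs.simple i * cs.simple j) - 1, by omega⟩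
          have hbraid : π (alternatingWord i j (orderOf (cs.simple i * cs.simple j)))
              = π (alternatingWord j i (orderOf (cs.simple i * cs.simple j))) :=
            (braid_eq_iff cs i j _).mpr hpm
          have hY : π (alternatingWord i j (orderOf (cs.simple i * cs.simple j)) ++ δ)
              = π (i :: α) := by
            rw [cs.wordProd_append, hbraid, ← cs.wordProd_append, hX]
          have hYlen : (alternatingWord i j (orderOf (cs.simple i * cs.simple j)) ++ δ).length
              = ℓ (π (i :: α)) := by
            rw [List.length_append, CoxeterSystem.length_alternatingWord]
            rw [List.length_append, CoxeterSystem.length_alternatingWord] at hXlen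
            exact hXlen
          -- peeling helpers
          have hpeel : ∀ (ζ : List B), π (i :: ζ) = π (i :: α) →
              (i :: ζ).length = ℓ (π (i :: α)) →
              ∀ k, SubProds cs (i :: α) k = SubProds cs (i :: ζ) k := by
            intro ζ hζπ hζlen k
            have hredζ : cs.IsReduced (i :: ζ) := by
              show ℓ (π (i :: ζ)) = (i :: ζ).length
              rw [hζπ, hζlen]
            have hζred : cs.IsReduced ζ := by
              have := CoxeterSystem.IsReduced.drop hredζ 1; simpa using this
            have hπζ : π ζ = π α := by
              have h4 : cs.simple i * π ζ = cs.simple i * π α := by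
                rw [← cs.wordProd_cons, ← cs.wordProd_cons]; exact hζπ
              exact mul_left_cancel h4
            have hζlen' : ζ.length ≤ n := by
              simp only [List.length_cons] at hζlen
              omega
            have hIH := ih α ζ hαlen hα hζred hπζ.symm
            ext u
            rw [mem_subProds_cons, mem_subProds_cons]
            simp only [hIH]
          have hpeel2 : ∀ (ζ : List B), π (j :: ζ) = π (i :: α) →
              (j :: ζ).length = ℓ (π (i :: α)) →
              ∀ k, SubProds cs (j :: β) k = SubProds cs (j :: ζ) k := by
            intro ζ hζπ hζlen k
            have hredζ : cs.IsReduced (j :: ζ) := by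
              show ℓ (π (j :: ζ)) = (j :: ζ).length
              rw [hζπ, hζlen]
            have hζred : cs.IsReduced ζ := by
              have := CoxeterSystem.IsReduced.drop hredζ 1; simpa using this
            have hπζ : π ζ = π β := by
              have h4 : cs.simple j * π ζ = cs.simple j * π β := by
                rw [← cs.wordProd_cons, ← cs.wordProd_cons, hζπ, heq]
              exact mul_left_cancel h4
            have hβlen : β.length ≤ n := by
              simp only [List.length_cons] at hL ⊢
              omega
            have hIH := ih β ζ hβlen hβ hζred hπζ.symm
            ext u
            rw [mem_subProds_cons, mem_subProds_cons]
            simp only [hIH]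
          have hswap := subProds_alt_swap cs j i hij.symm
            (orderOf (cs.simple i * cs.simple j))
            (by
              have h1 : cs.simple j * cs.simple i = (cs.simple i * cs.simple j)⁻¹ := by
                rw [mul_inv_rev, cs.inv_simple, cs.inv_simple]
              rw [h1, inv_pow, hpm, inv_one])
          have hXY : ∀ k, SubProds cs (alternatingWord j i (orderOf (cs.simple i * cs.simple j)) ++ δ) k
              = SubProds cs (alternatingWord i j (orderOf (cs.simple i * cs.simple j)) ++ δ) k := by
            intro k'
            ext u
            rw [mem_subProds_append, mem_subProds_append]
            simp only [hswap]
          have hXdec := CoxeterSystem.alternatingWord_succ' j i m0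
          have hYdec := CoxeterSystem.alternatingWord_succ' i j m0
          rw [← hm0'] at hXdec hYdec
          intro k
          rcases Nat.even_or_odd m0 with hev | hodd
          · -- X starts with i, Y starts with j
            have hXi : alternatingWord j i (orderOf (cs.simple i * cs.simple j)) ++ δ
                = i :: (alternatingWord j i m0 ++ δ) := by
              rw [hXdec, if_pos hev, List.cons_append]
            have hYj : alternatingWord i j (orderOf (cs.simple i * cs.simple j)) ++ δ
                = j :: (alternatingWord i j m0 ++ δ) := by
              rw [hYdec, if_pos hev, List.cons_append]
            calc SubProds cs (i :: α) k
                = SubProds cs (i :: (alternatingWord j i m0 ++ δ)) k :=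
                  hpeel _ (by rw [← hXi]; exact hX) (by rw [← hXi]; exact hXlen) k
              _ = SubProds cs (alternatingWord i j (orderOf (cs.simple i * cs.simple j)) ++ δ) k := by
                  rw [← hXi]; exact hXY k
              _ = SubProds cs (j :: (alternatingWord i j m0 ++ δ)) k := by rw [← hYj]
              _ = SubProds cs (j :: β) k :=
                  (hpeel2 _ (by rw [← hYj]; exact hY) (by rw [← hYj]; exact hYlen) k).symm
          · -- X starts with j, Y starts with i
            have hnev : ¬ Even m0 := by rw [Nat.not_even_iff_odd]; exact hodd
            have hXj : alternatingWord j i (orderOf (cs.simple i * cs.simple j)) ++ δ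
                = j :: (alternatingWord j i m0 ++ δ) := by
              rw [hXdec, if_neg hnev, List.cons_append]
            have hYi : alternatingWord i j (orderOf (cs.simple i * cs.simple j)) ++ δ
                = i :: (alternatingWord i j m0 ++ δ) := by
              rw [hYdec, if_neg hnev, List.cons_append]
            calc SubProds cs (i :: α) k
                = SubProds cs (i :: (alternatingWord i j m0 ++ δ)) k :=
                  hpeel _ (by rw [← hYi]; exact hY) (by rw [← hYi]; exact hYlen) k
              _ = SubProds cs (alternatingWord j i (orderOf (cs.simple i * cs.simple j)) ++ δ) k := by
                  rw [← hYi]; exact (hXY k).symm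
              _ = SubProds cs (j :: (alternatingWord j i m0 ++ δ)) k := by rw [← hXj]
              _ = SubProds cs (j :: β) k :=
                  (hpeel2 _ (by rw [← hXj]; exact hX) (by rw [← hXj]; exact hXlen) k).symm

end Main

end TwistedAux


/-- The twisted absolute length is well-defined: the minimal number of letters
one must delete from a reduced expression of `w` to obtain a subword lying in
`ι(θ)` is the same for all reduced expressions of `w`. -/
theorem stmt_15 {B W : Type*} [Group W] {M : CoxeterMatrix B}
    (cs : CoxeterSystem M W) (θ : W ≃* W)
    (hθ2 : ∀ w : W, θ (θ w) = w)
    (hθS : ∀ i : B, ∃ j : B, θ (cs.simple i) = cs.simple j)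
    (ω₁ ω₂ : List B) (h₁ : cs.IsReduced ω₁) (h₂ : cs.IsReduced ω₂)
    (heq : cs.wordProd ω₁ = cs.wordProd ω₂) :
    delNum cs θ ω₁ = delNum cs θ ω₂ := by
  have e₁ : cs.length (cs.wordProd ω₁) = ω₁.length := h₁
  have e₂ : cs.length (cs.wordProd ω₂) = ω₂.length := h₂
  have hL : ω₁.length = ω₂.length := by rw [heq] at e₁; omega
  have hsp := TwistedAux.subProds_invariant cs ω₁.length ω₁ ω₂ le_rfl h₁ h₂ heq
  unfold delNum
  congr 1
  ext l
  simp only [Set.mem_setOf_eq]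
  constructor
  · rintro ⟨ω', hs, hlen', hι⟩
    have hmem : cs.wordProd ω' ∈ TwistedAux.SubProds cs ω₁ ω'.length := ⟨ω', hs, rfl, rfl⟩
    rw [hsp ω'.length] at hmem
    obtain ⟨σ, hσs, hσl, hσπ⟩ := hmem
    exact ⟨σ, hσs, by omega, by rw [hσπ]; exact hι⟩
  · rintro ⟨ω', hs, hlen', hι⟩
    have hmem : cs.wordProd ω' ∈ TwistedAux.SubProds cs ω₂ ω'.length := ⟨ω', hs, rfl, rfl⟩
    rw [← hsp ω'.length] at hmem
    obtain ⟨σ, hσs, hσl, hσπ⟩ := hmem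
    exact ⟨σ, hσs, by omega, by rw [hσπ]; exact hι⟩
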